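/- If p/q = [a_1,...,a_n] in lowest terms and (a_1,...,a_n) is palindromic with n ≥ 3, then (q² + (−1)^n)/p is the numerator of the continued fraction [a_2, a_3, ..., a_{n-1}]. -/

import Mathlib

/-- Value of the continued fraction [a₁,...,aₙ] = a₁ + 1/(a₂ + 1/(... + 1/aₙ)). -/
def cfQ : List ℚ → ℚ
  | [] => 0
  | [a] => a
  | a :: b :: l => a + 1 / cfQ (b :: l)

/-- The continuant: `cont [a₁,...,aₙ]` is the numerator N[a₁,...,aₙ] of the
continued fraction [a₁,...,aₙ], with N[] = 1. -/
def cont : List ℕ → ℕ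
  | [] => 1
  | [a] => a
  | a :: b :: l => a * cont (b :: l) + cont l

lemma tail_dropLast_comm (l : List ℕ) : l.tail.dropLast = l.dropLast.tail := by
  cases l with
  | nil => simp
  | cons a m => cases m with
    | nil => simp
    | cons b r => simp

lemma cont_cons (a : ℕ) (l : List ℕ) (h : l ≠ []) :
    cont (a :: l) = a * cont l + cont l.tail := by
  cases l with
  | nil => exact absurd rfl h
  | cons b m => rfl

lemma cont_pos (l : List ℕ) (h : ∀ x ∈ l, 0 < x) : 0 < cont l := by
  induction l with
  | nil => simp [cont]
  | cons a m ih =>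
    cases m with
    | nil => exact h a (by simp)
    | cons b r =>
      have h1 : 0 < cont (b :: r) := ih (fun x hx => h x (List.mem_cons_of_mem a hx))
      have ha : 0 < a := h a (by simp)
      have : 0 < a * cont (b :: r) := Nat.mul_pos ha h1
      simp only [cont]
      omega

lemma cont_concat (a : ℕ) (n : ℕ) : ∀ l : List ℕ, l.length ≤ n → l ≠ [] →
    cont (l ++ [a]) = a * cont l + cont l.dropLast := by
  induction n with
  | zero => intro l hl h; interval_cases hx : l.length <;> simp_all
  | succ n ih =>
    intro l hl h
    match l with
    | [b] => simp [cont]; ring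
    | [b, c] => simp [cont]; ring
    | b :: c :: d :: r =>
      have h1 : cont ((b :: c :: d :: r) ++ [a]) =
          b * cont ((c :: d :: r) ++ [a]) + cont ((d :: r) ++ [a]) := rfl
      rw [h1, ih (c :: d :: r) (by simpa using Nat.le_of_succ_le_succ hl) (by simp),
        ih (d :: r) (by simp at hl ⊢; omega) (by simp)]
      have h2 : cont (b :: c :: d :: r) = b * cont (c :: d :: r) + cont (d :: r) := rfl
      have h3 : (b :: c :: d :: r).dropLast = b :: (c :: d :: r).dropLast := by simp
      rw [h2, h3]
      have h4 : cont (b :: (c :: d :: r).dropLast) =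
          b * cont ((c :: d :: r).dropLast) + cont ((c :: d :: r).dropLast.tail) := by
        apply cont_cons; simp
      rw [h4]
      have h5 : (c :: d :: r).dropLast.tail = (d :: r).dropLast := by
        rw [← tail_dropLast_comm]; rfl
      rw [h5]; ring

lemma cont_reverse (n : ℕ) : ∀ l : List ℕ, l.length ≤ n → cont l.reverse = cont l := by
  induction n with
  | zero => intro l hl; interval_cases hx : l.length <;> simp_all
  | succ n ih =>
    intro l hl
    match l with
    | [] => rfl
    | [a] => rfl
    | a :: b :: m =>
      have h1 : (a :: b :: m).reverse = (b :: m).reverse ++ [a] := by simp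
      rw [h1, cont_concat a n (b :: m).reverse (by simpa using Nat.le_of_succ_le_succ hl)
        (by simp), ih (b :: m) (by simpa using Nat.le_of_succ_le_succ hl)]
      have h2 : (b :: m).reverse.dropLast = m.reverse := by
        have : (b :: m).reverse = m.reverse ++ [b] := by simp
        rw [this, List.dropLast_concat]
      rw [h2, ih m (by simp at hl; omega)]
      rfl

lemma cont_det (n : ℕ) : ∀ l : List ℕ, l.length ≤ n → 2 ≤ l.length →
    (cont l : ℤ) * cont l.tail.dropLast - cont l.dropLast * cont l.tail =
      (-1 : ℤ) ^ l.length := by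
  induction n with
  | zero => intro l h1 h2; omega
  | succ n ih =>
    intro l h1 h2
    match l with
    | [a, b] => simp [cont]; try ring
    | a :: b :: c :: m =>
      have IH := ih (b :: c :: m) (by simp at h1 ⊢; omega) (by simp)
      have e1 : cont (a :: b :: c :: m) = a * cont (b :: c :: m) + cont (c :: m) := rfl
      have e2 : (a :: b :: c :: m).tail.dropLast = (b :: c :: m).dropLast := rfl
      have e3 : (a :: b :: c :: m).dropLast = a :: (b :: c :: m).dropLast := by simp
      have e4 : cont (a :: (b :: c :: m).dropLast) =
          a * cont ((b :: c :: m).dropLast) + cont ((b :: c :: m).dropLast.tail) := by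
        apply cont_cons; simp
      have e5 : (b :: c :: m).dropLast.tail = (b :: c :: m).tail.dropLast := by
        rw [tail_dropLast_comm]
      have e6 : (a :: b :: c :: m).tail = b :: c :: m := rfl
      have e7 : (b :: c :: m).tail = c :: m := rfl
      rw [e7] at IH
      rw [e1, e2, e3, e4, e5, e6, e7]
      have hlen : (a :: b :: c :: m).length = (b :: c :: m).length + 1 := rfl
      rw [hlen, pow_succ]
      push_cast
      push_cast at IH
      linear_combination (-1 : ℤ) * IH

lemma cfQ_eq (n : ℕ) : ∀ l : List ℕ, l.length ≤ n → l ≠ [] → (∀ x ∈ l, 0 < x) →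
    cfQ (l.map (fun x => (x : ℚ))) = (cont l : ℚ) / (cont l.tail : ℚ) := by
  induction n with
  | zero => intro l h1 h2; simp_all
  | succ n ih =>
    intro l h1 h2 hpos
    match l with
    | [a] => simp [cfQ, cont]
    | a :: b :: m =>
      have hbm : 0 < cont (b :: m) := cont_pos _ (fun x hx => hpos x (by simp at hx ⊢; tauto))
      have hQ : (0 : ℚ) < (cont (b :: m) : ℚ) := by exact_mod_cast hbm
      have hm : 0 < cont m := cont_pos _ (fun x hx => hpos x (by simp [hx]))
      have hmQ : (0 : ℚ) < (cont m : ℚ) := by exact_mod_cast hm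
      have h3 : cfQ ((a :: b :: m).map (fun x => (x : ℚ))) =
          (a : ℚ) + 1 / cfQ ((b :: m).map (fun x => (x : ℚ))) := rfl
      rw [h3, ih (b :: m) (by simpa using Nat.le_of_succ_le_succ h1) (by simp)
        (fun x hx => hpos x (by simp at hx ⊢; tauto))]
      have e1 : cont (a :: b :: m) = a * cont (b :: m) + cont m := rfl
      have e2 : (b :: m).tail = m := rfl
      have e3 : (a :: b :: m).tail = b :: m := rfl
      rw [e1, e2, e3]
      field_simp
      norm_cast

/-- If p/q = [a₁,...,aₙ] in lowest terms, (a₁,...,aₙ) palindromic, n ≥ 3, then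
(q² + (−1)ⁿ)/p is the numerator of the continued fraction [a₂,...,aₙ₋₁]. -/
theorem stmt11 (l : List ℕ) (hl : 3 ≤ l.length) (hpos : ∀ x ∈ l, 0 < x)
    (hpal : l.reverse = l) :
    (cont (l.tail.dropLast) : ℤ) * (cfQ (l.map (fun x => (x : ℚ)))).num =
      ((cfQ (l.map (fun x => (x : ℚ)))).den : ℤ) ^ 2 + (-1 : ℤ) ^ l.length := by
  have hne : l ≠ [] := by intro h; simp [h] at hl
  have hdet := cont_det l.length l le_rfl (by omega)
  have hp : 0 < cont l := cont_pos _ hpos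
  have hq : 0 < cont l.tail := cont_pos _ (fun x hx => hpos x (List.mem_of_mem_tail hx))
  have hcop : Nat.Coprime (cont l) (cont l.tail) := by
    rw [← Nat.isCoprime_iff_coprime]
    rcases Nat.even_or_odd l.length with he | ho
    · rw [he.neg_one_pow] at hdet
      exact ⟨(cont l.tail.dropLast : ℤ), -(cont l.dropLast : ℤ), by linarith [hdet]⟩
    · rw [ho.neg_one_pow] at hdet
      exact ⟨-(cont l.tail.dropLast : ℤ), (cont l.dropLast : ℤ), by linarith [hdet]⟩
  have hval : cfQ (l.map (fun x => (x : ℚ))) =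
      ((cont l : ℤ) : ℚ) / ((cont l.tail : ℤ) : ℚ) := by
    rw [cfQ_eq l.length l le_rfl hne hpos]; push_cast; ring
  have hqz : (0 : ℤ) < (cont l.tail : ℤ) := by exact_mod_cast hq
  have hcop' : Nat.Coprime (cont l : ℤ).natAbs (cont l.tail : ℤ).natAbs := by
    simpa using hcop
  have hnum : (cfQ (l.map (fun x => (x : ℚ)))).num = (cont l : ℤ) := by
    rw [hval]; exact Rat.num_div_eq_of_coprime hqz hcop'
  have hden : ((cfQ (l.map (fun x => (x : ℚ)))).den : ℤ) = (cont l.tail : ℤ) := by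
    rw [hval]; exact Rat.den_div_eq_of_coprime hqz hcop'
  have hDT : cont l.dropLast = cont l.tail := by
    have h1 : l.tail = l.dropLast.reverse := by
      conv_lhs => rw [← hpal]
      exact List.tail_reverse (l := l)
    rw [h1, cont_reverse l.dropLast.length l.dropLast le_rfl]
  rw [hnum, hden]
  rw [hDT] at hdet
  nlinarith [hdet]
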